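/- Let U be a finite set and let F be a finite family of subsets of U. For a finite sequence of choices from F, define the coverage value of the sequence as the cardinality of the union of the chosen sets. If the greedy algorithm runs for k steps, at each step choosing a set from F that maximizes the increase in coverage, then the coverage of the greedy solution after k steps is at least (1 - (1-1/k)^k) times the maximum coverage achievable by any k sets from F; in particular it is at least (1 - e^{-1}) times the optimum. -/

import Mathlib

/-- Greedy max-coverage guarantee: the greedy solution after `k` steps covers at least
`(1 - (1-1/k)^k)` (hence at least `1 - e⁻¹`) times the coverage of any `k` sets from `F`. -/
theorem greedy_max_coverage {U : Type*} [Fintype U] [DecidableEq U]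
    (F : Finset (Finset U)) (k : ℕ) (hk : 0 < k)
    (G : ℕ → Finset U) (hG0 : G 0 = ∅)
    (hgreedy : ∀ h < k, ∃ S ∈ F, G (h + 1) = G h ∪ S ∧
      ∀ T ∈ F, (G h ∪ T).card ≤ (G h ∪ S).card)
    (T : Fin k → Finset U) (hT : ∀ i, T i ∈ F) :
    (1 - (1 - 1 / (k : ℝ)) ^ k) * ((Finset.univ.biUnion T).card : ℝ) ≤ ((G k).card : ℝ) ∧
    (1 - Real.exp (-1)) * ((Finset.univ.biUnion T).card : ℝ) ≤ ((G k).card : ℝ) := by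
  set W : Finset U := Finset.univ.biUnion T with hW
  set OPT : ℝ := (W.card : ℝ) with hOPT
  have hkR : (0 : ℝ) < (k : ℝ) := by exact_mod_cast hk
  have hbase : (0 : ℝ) ≤ 1 - 1 / (k : ℝ) := by
    have : (1 : ℝ) ≤ (k : ℝ) := by exact_mod_cast hk
    have := div_le_one_of_le₀ this (le_of_lt hkR)
    linarith [div_le_one_of_le₀ (by exact_mod_cast hk : (1:ℝ) ≤ (k:ℝ)) (le_of_lt hkR)]
  have hOPTnn : (0 : ℝ) ≤ OPT := by positivity
  -- key step inequality
  have step : ∀ h < k, OPT - ((G (h+1)).card : ℝ) ≤ (1 - 1/(k:ℝ)) * (OPT - ((G h).card : ℝ)) := by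
    intro h hh
    obtain ⟨S, hS, hGh1, hmax⟩ := hgreedy h hh
    have hne : (Finset.univ : Finset (Fin k)).Nonempty := ⟨⟨0, hk⟩, Finset.mem_univ _⟩
    -- W \ G h is covered by the T i \ G h
    have hsub : W \ G h ⊆ Finset.univ.biUnion (fun i => T i \ G h) := by
      intro x hx
      rw [Finset.mem_sdiff] at hx
      rw [hW, Finset.mem_biUnion] at hx
      obtain ⟨⟨i, _, hxi⟩, hxg⟩ := hx
      exact Finset.mem_biUnion.2 ⟨i, Finset.mem_univ _, Finset.mem_sdiff.2 ⟨hxi, hxg⟩⟩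
    have hsum : ((W \ G h).card : ℝ) ≤ ∑ i : Fin k, ((T i \ G h).card : ℝ) := by
      have h1 : (W \ G h).card ≤ (Finset.univ.biUnion (fun i => T i \ G h)).card :=
        Finset.card_le_card hsub
      have h2 := Finset.card_biUnion_le (s := (Finset.univ : Finset (Fin k)))
        (t := fun i => T i \ G h)
      have : ((W \ G h).card : ℕ) ≤ ∑ i : Fin k, (T i \ G h).card := le_trans h1 h2
      exact_mod_cast this
    -- pigeonhole: some i has a big residual
    obtain ⟨i, _, hi⟩ : ∃ i ∈ (Finset.univ : Finset (Fin k)),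
        (∑ j : Fin k, ((T j \ G h).card : ℝ)) / k ≤ ((T i \ G h).card : ℝ) := by
      by_contra hcon
      push_neg at hcon
      have : ∑ j : Fin k, ((T j \ G h).card : ℝ) <
          ∑ j : Fin k, (∑ j : Fin k, ((T j \ G h).card : ℝ)) / k := by
        apply Finset.sum_lt_sum_of_nonempty hne
        intro j hj
        exact hcon j hj
      rw [Finset.sum_const, Finset.card_univ, Fintype.card_fin, nsmul_eq_mul] at this
      rw [mul_div_cancel₀ _ (ne_of_gt hkR)] at this
      exact lt_irrefl _ this
    -- card bound from greedy choice
    have hWG : OPT - ((G h).card : ℝ) ≤ ((W \ G h).card : ℝ) := by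
      have := Finset.card_le_card_sdiff_add_card (s := W) (t := G h)
      have : (W.card : ℝ) ≤ ((W \ G h).card : ℝ) + ((G h).card : ℝ) := by exact_mod_cast this
      linarith
    have hunion : ((G h ∪ T i).card : ℝ) = ((G h).card : ℝ) + ((T i \ G h).card : ℝ) := by
      have := Finset.card_sdiff_add_card (s := T i) (t := G h)
      have h2 : (T i \ G h).card + (G h).card = (G h ∪ T i).card := by
        rw [this, Finset.union_comm]
      exact_mod_cast (by omega : (G h ∪ T i).card = (G h).card + (T i \ G h).card)
    have hgain : ((G h).card : ℝ) + ((T i \ G h).card : ℝ) ≤ ((G (h+1)).card : ℝ) := by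
      rw [hGh1, ← hunion]
      exact_mod_cast hmax (T i) (hT i)
    have hnum : OPT - ((G h).card : ℝ) ≤ ∑ j : Fin k, ((T j \ G h).card : ℝ) :=
      le_trans hWG hsum
    have hki : (OPT - ((G h).card : ℝ)) / k ≤ ((T i \ G h).card : ℝ) := by
      refine le_trans ?_ hi
      gcongr
    have expand : OPT - ((G (h+1)).card : ℝ) ≤ OPT - ((G h).card : ℝ) - (OPT - ((G h).card : ℝ))/k := by
      linarith
    have : OPT - ((G h).card : ℝ) - (OPT - ((G h).card : ℝ))/k = (1 - 1/(k:ℝ)) * (OPT - ((G h).card : ℝ)) := by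
      field_simp
    linarith [expand, this.le, this.ge]
  -- induction
  have main : ∀ h ≤ k, OPT - ((G h).card : ℝ) ≤ (1 - 1/(k:ℝ))^h * OPT := by
    intro h
    induction h with
    | zero => intro _; simp [hG0]
    | succ n ih =>
      intro hn
      have h1 := step n (by omega)
      have h2 := ih (by omega)
      calc OPT - ((G (n+1)).card : ℝ) ≤ (1 - 1/(k:ℝ)) * (OPT - ((G n).card : ℝ)) := h1
        _ ≤ (1 - 1/(k:ℝ)) * ((1 - 1/(k:ℝ))^n * OPT) := by
            exact mul_le_mul_of_nonneg_left h2 hbase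
        _ = (1 - 1/(k:ℝ))^(n+1) * OPT := by ring
  have hmk := main k le_rfl
  have first : (1 - (1 - 1 / (k : ℝ)) ^ k) * OPT ≤ ((G k).card : ℝ) := by linarith
  refine ⟨first, ?_⟩
  have hexp : (1 - 1/(k:ℝ))^k ≤ Real.exp (-1) := by
    have h1 : (1 - 1/(k:ℝ)) ≤ Real.exp (-(1/(k:ℝ))) := by
      have := Real.add_one_le_exp (-(1/(k:ℝ)))
      linarith
    calc (1 - 1/(k:ℝ))^k ≤ (Real.exp (-(1/(k:ℝ))))^k := pow_le_pow_left₀ hbase h1 k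
      _ = Real.exp ((-(1/(k:ℝ))) * k) := by
          rw [← Real.exp_nat_mul]; ring_nf
      _ = Real.exp (-1) := by
          congr 1
          field_simp
  nlinarith [hOPTnn, first, hexp]
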